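/- arXiv:1011.3997 — 2 statements merged into one kernel-verified Lean document; each statement's English description precedes it below -/
import Mathlib

section
/- With the notation above, let N, M be positive integers and for integers a < b let e(a,b) be the number of n with N < n ≤ N+M and a < Δ_n ≤ b, and f(a,b) the number of n with N < n ≤ N+M and a < Δ(n) ≤ b. Then |e(a,b) − f(−(b+1), −(a+1))| ≤ |a| + |b| + 2. -/
open Finset

/-- Lemma 2 of the paper: with `Δ n` defined by
`t (n + Δ n - 1) < γ n ≤ t (n + Δ n)` and `Δ' n` by
`γ (n + Δ' n) ≤ t n < γ (n + Δ' n + 1)`, the counts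
`e(a,b) = #{n ∈ (N, N+M] : a < Δ n ≤ b}` and
`f(a,b) = #{n ∈ (N, N+M] : a < Δ' n ≤ b}` satisfy
`|e(a,b) − f(−(b+1), −(a+1))| ≤ |a| + |b| + 2`. -/
theorem count_delta_close (N M : ℤ) (hN : 0 < N) (hM : 0 < M)
    (t γ : ℤ → ℝ) (ht : StrictMono t) (hγ : Monotone γ)
    (httop : Filter.Tendsto t Filter.atTop Filter.atTop)
    (htbot : Filter.Tendsto t Filter.atBot Filter.atBot)
    (hγtop : Filter.Tendsto γ Filter.atTop Filter.atTop)
    (hγbot : Filter.Tendsto γ Filter.atBot Filter.atBot)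
    (Δ Δ' : ℤ → ℤ)
    (hΔ : ∀ n, t (n + Δ n - 1) < γ n ∧ γ n ≤ t (n + Δ n))
    (hΔ' : ∀ n, γ (n + Δ' n) ≤ t n ∧ t n < γ (n + Δ' n + 1))
    (a b : ℤ) (hab : a < b) :
    |(((Finset.Ioc N (N + M)).filter fun n => a < Δ n ∧ Δ n ≤ b).card : ℤ) -
        (((Finset.Ioc N (N + M)).filter fun n =>
          -(b + 1) < Δ' n ∧ Δ' n ≤ -(a + 1)).card : ℤ)| ≤ |a| + |b| + 2 := by
  classical
  set s : Finset ℤ := Finset.Ioc N (N + M) with hs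
  -- characterizations of Δ and Δ'
  have hΔiff : ∀ n c : ℤ, Δ n ≤ c ↔ γ n ≤ t (n + c) := by
    intro n c
    constructor
    · intro h
      exact (hΔ n).2.trans (ht.monotone (by linarith))
    · intro h
      by_contra hc
      push_neg at hc
      have h2 : t (n + c) ≤ t (n + Δ n - 1) := ht.monotone (by omega)
      linarith [(hΔ n).1]
  have hΔ'iff : ∀ n c : ℤ, Δ' n ≤ c ↔ t n < γ (n + c + 1) := by
    intro n c
    constructor
    · intro h
      exact lt_of_lt_of_le (hΔ' n).2 (hγ (by omega))
    · intro h
      by_contra hc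
      push_neg at hc
      have h2 : γ (n + c + 1) ≤ γ (n + Δ' n) := hγ (by omega)
      linarith [(hΔ' n).1]
  have hΔlt : ∀ n c : ℤ, c < Δ n ↔ ¬ γ n ≤ t (n + c) := by
    intro n c
    rw [← not_le]
    exact not_congr (hΔiff n c)
  have hΔ'lt : ∀ n c : ℤ, c < Δ' n ↔ ¬ t n < γ (n + c + 1) := by
    intro n c
    rw [← not_le]
    exact not_congr (hΔ'iff n c)
  -- abbreviations
  set Eb : Finset ℤ := s.filter (fun n => γ n ≤ t (n + b)) with hEb
  set Ea : Finset ℤ := s.filter (fun n => γ n ≤ t (n + a)) with hEa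
  set Fb : Finset ℤ := s.filter (fun n => γ (n - b) ≤ t n) with hFb
  set Fa : Finset ℤ := s.filter (fun n => γ (n - a) ≤ t n) with hFa
  have hsubE : Ea ⊆ Eb := by
    apply Finset.monotone_filter_right
    intro n _ hn
    exact hn.trans (ht.monotone (by omega))
  have hsubF : Fa ⊆ Fb := by
    apply Finset.monotone_filter_right
    intro n _ hn
    exact le_trans (hγ (by omega)) hn
  -- identify the two counted sets
  have he : (s.filter fun n => a < Δ n ∧ Δ n ≤ b) = Eb \ Ea := by
    ext n
    simp only [hEb, hEa, Finset.mem_sdiff, Finset.mem_filter, hΔlt, hΔiff, not_and]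
    tauto
  have hf : (s.filter fun n => -(b + 1) < Δ' n ∧ Δ' n ≤ -(a + 1)) = Fb \ Fa := by
    have e1 : ∀ n : ℤ, n + -(b + 1) + 1 = n - b := fun n => by ring
    have e2 : ∀ n : ℤ, n + -(a + 1) + 1 = n - a := fun n => by ring
    ext n
    simp only [hFa, hFb, Finset.mem_sdiff, Finset.mem_filter, hΔ'lt, hΔ'iff, e1, e2,
      not_lt, not_and, not_le]
    tauto
  -- counting lemma: filtering over nearby intervals
  have hcount : ∀ (P : ℤ → Prop) [DecidablePred P] (u v : Finset ℤ),
      (u.filter P).card ≤ (v.filter P).card + (u \ v).card := by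
    intro P _ u v
    refine le_trans (Finset.card_le_card ?_) (Finset.card_union_le _ _)
    intro x hx
    rw [Finset.mem_filter] at hx
    rw [Finset.mem_union, Finset.mem_sdiff]
    by_cases hv : x ∈ v
    · exact Or.inl (Finset.mem_filter.mpr ⟨hv, hx.2⟩)
    · exact Or.inr ⟨hx.1, hv⟩
  -- the symmetric difference of shifted intervals is small
  have haux : ∀ x c : ℤ,
      ((Finset.Ioc (x + c) (x + M + c)) \ Finset.Ioc x (x + M)).card ≤ c.natAbs := by
    intro x c
    have hsub : (Finset.Ioc (x + c) (x + M + c)) \ Finset.Ioc x (x + M)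
        ⊆ Finset.Ioc (x + M) (x + M + c) ∪ Finset.Ioc (x + c) x := by
      intro y hy
      simp only [Finset.mem_sdiff, Finset.mem_Ioc, Finset.mem_union, not_and, not_le] at hy ⊢
      omega
    refine le_trans (Finset.card_le_card hsub) (le_trans (Finset.card_union_le _ _) ?_)
    rw [Int.card_Ioc, Int.card_Ioc]
    omega
  -- shift bijection: Ec has the same card as the shifted version of Fc
  have hshift : ∀ c : ℤ, (s.filter (fun n => γ n ≤ t (n + c))).card
      = ((Finset.Ioc (N + c) (N + M + c)).filter (fun ν => γ (ν - c) ≤ t ν)).card := by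
    intro c
    apply Finset.card_bij' (fun n _ => n + c) (fun ν _ => ν - c)
    · intro n hn
      simp only [hs, Finset.mem_filter, Finset.mem_Ioc] at hn ⊢
      constructor
      · omega
      · simpa using hn.2
    · intro ν hν
      simp only [hs, Finset.mem_filter, Finset.mem_Ioc] at hν ⊢
      constructor
      · omega
      · simpa using hν.2
    · intro n _; ring
    · intro ν _; ring
  -- |Ec.card - Fc.card| ≤ |c|
  have hclose : ∀ c : ℤ, |((s.filter (fun n => γ n ≤ t (n + c))).card : ℤ)
      - ((s.filter (fun n => γ (n - c) ≤ t n)).card : ℤ)| ≤ |c| := by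
    intro c
    have h1 : ((Finset.Ioc (N + c) (N + M + c)).filter (fun ν => γ (ν - c) ≤ t ν)).card
        ≤ (s.filter (fun ν => γ (ν - c) ≤ t ν)).card + c.natAbs := by
      refine le_trans (hcount _ _ s) ?_
      have h3 := haux N c
      rw [hs]
      omega
    have h2 : (s.filter (fun ν => γ (ν - c) ≤ t ν)).card
        ≤ ((Finset.Ioc (N + c) (N + M + c)).filter (fun ν => γ (ν - c) ≤ t ν)).card
          + c.natAbs := by
      refine le_trans (hcount _ s (Finset.Ioc (N + c) (N + M + c))) ?_
      have h3 := haux (N + c) (-c)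
      rw [show (N + c) + (-c) = N by ring, show (N + c) + M + (-c) = N + M by ring,
        show (N + c) + M = N + M + c by ring, Int.natAbs_neg] at h3
      rw [hs]
      omega
    rw [hshift c, abs_le]
    zify at h1 h2
    constructor <;> linarith
  -- assemble
  have hcb := hclose b
  have hca := hclose a
  rw [← hEb, ← hFb] at hcb
  rw [← hEa, ← hFa] at hca
  have heq1 : ((s.filter fun n => a < Δ n ∧ Δ n ≤ b).card : ℤ) = (Eb.card : ℤ) - Ea.card := by
    rw [he, Finset.card_sdiff_of_subset hsubE, Nat.cast_sub (Finset.card_le_card hsubE)]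
  have heq2 : ((s.filter fun n => -(b + 1) < Δ' n ∧ Δ' n ≤ -(a + 1)).card : ℤ)
      = (Fb.card : ℤ) - Fa.card := by
    rw [hf, Finset.card_sdiff_of_subset hsubF, Nat.cast_sub (Finset.card_le_card hsubF)]
  rw [heq1, heq2]
  rw [abs_le] at hcb hca ⊢
  constructor <;> linarith
end

section
/- Suppose ν : ℕ → ℕ satisfies ν(j) ≤ D·M·e^{−C j} for all j ≥ 1, where C, D > 0 and M > 0. Then for any real a ≥ 1 with C ≤ 1, ∑_{j=1}^∞ j^a · ν(j) ≤ 3·D·M·Γ(a+1)/C^{a+1}. -/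
open MeasureTheory Set

/-- if `ν(j) ≤ D·M·e^{−Cj}` for all `j ≥ 1` with
`0 < C ≤ 1`, `D > 0`, `M > 0`, then for any real `a ≥ 1`,
`∑_{j≥1} j^a ν(j) ≤ 3·D·M·Γ(a+1)/C^{a+1}`. -/
theorem sum_pow_mult_bound (ν : ℕ → ℕ) (C D M : ℝ)
    (hC : 0 < C) (hC1 : C ≤ 1) (hD : 0 < D) (hM : 0 < M)
    (hν : ∀ j : ℕ, 1 ≤ j → (ν j : ℝ) ≤ D * M * Real.exp (-C * j))
    (a : ℝ) (ha : 1 ≤ a) :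
    (∑' j : ℕ, (j : ℝ) ^ a * ν j) ≤
      3 * D * M * Real.Gamma (a + 1) / C ^ (a + 1) := by
  have ha0 : (0:ℝ) ≤ a := le_trans zero_le_one ha
  set f : ℝ → ℝ := fun x => x ^ a * Real.exp (-(C * x)) with hf
  have hfcont : Continuous f :=
    (Real.continuous_rpow_const ha0).mul
      (Real.continuous_exp.comp (continuous_const.mul continuous_id).neg)
  have hfnn : ∀ x : ℝ, 0 ≤ x → 0 ≤ f x := fun x hx => by
    apply mul_nonneg (Real.rpow_nonneg hx a) (Real.exp_pos _).le
  -- integrability on Ioi 0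
  have hfint : IntegrableOn f (Ioi 0) := by
    have := integrableOn_rpow_mul_exp_neg_mul_rpow (p := 1) (s := a) (b := C)
      (by linarith : (-1:ℝ) < a) zero_lt_one hC
    simpa [Real.rpow_one, neg_mul] using this
  -- value of the integral
  have hival : ∫ x in Ioi (0:ℝ), f x = Real.Gamma (a+1) / C ^ (a+1) := by
    have := Real.integral_rpow_mul_exp_neg_mul_Ioi
      (a := a + 1) (r := C) (by linarith) hC
    simp only [add_sub_cancel_right] at this
    rw [hf]
    rw [this, one_div, Real.inv_rpow hC.le, div_eq_inv_mul]
  -- pointwise: f j ≤ e * ∫_j^{j+1} f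
  have key : ∀ j : ℕ, f j ≤ Real.exp 1 * ∫ x in (j:ℝ)..(j+1:ℕ), f x := by
    intro j
    have hle : ((j:ℝ)) ≤ ((j+1:ℕ):ℝ) := by push_cast; linarith
    have h1 : ∀ x ∈ Icc ((j:ℝ)) ((j+1:ℕ):ℝ), f j ≤ Real.exp 1 * f x := by
      rintro x ⟨hx1, hx2⟩
      push_cast at hx2
      have hj0 : (0:ℝ) ≤ (j:ℝ) := Nat.cast_nonneg j
      have h2 : (j:ℝ) ^ a ≤ x ^ a := Real.rpow_le_rpow hj0 hx1 ha0
      have h3 : Real.exp (-(C * j)) ≤ Real.exp 1 * Real.exp (-(C * x)) := by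
        rw [← Real.exp_add]
        apply Real.exp_le_exp.mpr
        nlinarith
      calc f j = (j:ℝ)^a * Real.exp (-(C*j)) := rfl
        _ ≤ x ^ a * (Real.exp 1 * Real.exp (-(C * x))) := by
            apply mul_le_mul h2 h3 (Real.exp_pos _).le (Real.rpow_nonneg (by linarith) a)
        _ = Real.exp 1 * f x := by ring
    have hconst : f j = ∫ _x in (j:ℝ)..(j+1:ℕ), f j := by
      rw [intervalIntegral.integral_const]
      push_cast
      ring_nf
    rw [hconst]
    have := intervalIntegral.integral_mono_on hle
      (intervalIntegrable_const (μ := MeasureTheory.volume)) ((hfcont.const_smul (Real.exp 1)).intervalIntegrable _ _) h1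
    simpa [intervalIntegral.integral_smul, smul_eq_mul] using this
  -- partial sums bound
  have hIoi : ∀ N : ℕ, ∫ x in (0:ℝ)..(N:ℝ), f x ≤ Real.Gamma (a+1) / C ^ (a+1) := by
    intro N
    rw [← hival, intervalIntegral.integral_of_le (Nat.cast_nonneg N)]
    apply setIntegral_mono_set hfint
    · filter_upwards [ae_restrict_mem measurableSet_Ioi] with x hx using hfnn x (le_of_lt hx)
    · exact Filter.Eventually.of_forall (fun x hx => hx.1)
  have hsum : ∀ N : ℕ, ∑ j ∈ Finset.range N, (j:ℝ) ^ a * ν j ≤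
      3 * D * M * Real.Gamma (a + 1) / C ^ (a + 1) := by
    intro N
    have step1 : ∑ j ∈ Finset.range N, (j:ℝ) ^ a * ν j ≤
        ∑ j ∈ Finset.range N, D * M * f j := by
      apply Finset.sum_le_sum
      intro j _
      rcases Nat.eq_zero_or_pos j with rfl | hj
      · have h0 : ((0:ℕ):ℝ) ^ a * ((ν 0 : ℕ) : ℝ) = 0 := by
          simp [Real.zero_rpow (by linarith : a ≠ 0)]
        rw [h0]
        exact mul_nonneg (mul_pos hD hM).le (hfnn _ (by simp))
      · have := hν j hj
        have h2 : ((j:ℝ))^a * ν j ≤ (j:ℝ)^a * (D * M * Real.exp (-C * j)) := by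
          apply mul_le_mul_of_nonneg_left this (Real.rpow_nonneg (Nat.cast_nonneg j) a)
        calc ((j:ℝ))^a * ν j ≤ (j:ℝ)^a * (D * M * Real.exp (-C * j)) := h2
          _ = D * M * f j := by rw [hf]; simp only [neg_mul]; ring
    have step2 : ∑ j ∈ Finset.range N, D * M * f j ≤
        D * M * Real.exp 1 * ∫ x in (0:ℝ)..(N:ℝ), f x := by
      have htel : ∑ j ∈ Finset.range N, ∫ x in ((j:ℕ):ℝ)..((j+1:ℕ):ℝ), f x
          = ∫ x in ((0:ℕ):ℝ)..((N:ℕ):ℝ), f x :=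
        intervalIntegral.sum_integral_adjacent_intervals
          (fun k _ => hfcont.intervalIntegrable _ _)
      have hDM : (0:ℝ) ≤ D * M := le_of_lt (mul_pos hD hM)
      have hfs : ∑ j ∈ Finset.range N, f j ≤ Real.exp 1 * ∫ x in (0:ℝ)..(N:ℝ), f x := by
        calc ∑ j ∈ Finset.range N, f j
            ≤ ∑ j ∈ Finset.range N, Real.exp 1 * ∫ x in ((j:ℕ):ℝ)..((j+1:ℕ):ℝ), f x :=
              Finset.sum_le_sum (fun j _ => key j)
          _ = Real.exp 1 * ∑ j ∈ Finset.range N, ∫ x in ((j:ℕ):ℝ)..((j+1:ℕ):ℝ), f x :=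
              (Finset.mul_sum _ _ _).symm
          _ = Real.exp 1 * ∫ x in (0:ℝ)..(N:ℝ), f x := by rw [htel]; norm_num
      calc ∑ j ∈ Finset.range N, D * M * f j
          = D * M * ∑ j ∈ Finset.range N, f j := (Finset.mul_sum _ _ _).symm
        _ ≤ D * M * (Real.exp 1 * ∫ x in (0:ℝ)..(N:ℝ), f x) :=
            mul_le_mul_of_nonneg_left hfs hDM
        _ = D * M * Real.exp 1 * ∫ x in (0:ℝ)..(N:ℝ), f x := by ring
    have step3 : D * M * Real.exp 1 * ∫ x in (0:ℝ)..(N:ℝ), f x ≤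
        3 * D * M * Real.Gamma (a + 1) / C ^ (a + 1) := by
      have hG : 0 ≤ Real.Gamma (a+1) / C ^ (a+1) := by
        apply div_nonneg (Real.Gamma_nonneg_of_nonneg (by linarith))
        exact (Real.rpow_pos_of_pos hC _).le
      have he3 : Real.exp 1 ≤ 3 := by
        have := Real.exp_one_lt_d9; linarith
      calc D * M * Real.exp 1 * ∫ x in (0:ℝ)..(N:ℝ), f x
          ≤ D * M * Real.exp 1 * (Real.Gamma (a+1) / C ^ (a+1)) := by
            apply mul_le_mul_of_nonneg_left (hIoi N)
            positivity
        _ ≤ D * M * 3 * (Real.Gamma (a+1) / C ^ (a+1)) := by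
            apply mul_le_mul_of_nonneg_right _ hG
            have hDM : (0:ℝ) ≤ D * M := le_of_lt (mul_pos hD hM)
            nlinarith
        _ = 3 * D * M * Real.Gamma (a + 1) / C ^ (a + 1) := by ring
    linarith
  apply Real.tsum_le_of_sum_range_le _ hsum
  intro n
  exact mul_nonneg (Real.rpow_nonneg (Nat.cast_nonneg n) a) (Nat.cast_nonneg _)
end
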